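/- Let 𝒮 = {S^i}_{i=1}^d be a generalized 1D-ordered family and {h^i}_{i=1}^d ⊆ {0,1}^t a Gray code. Define L^j, R^j as the sets of elements lying only in pieces indexed where h_j = 0 (respectively only where h_j = 1). Then the bicliques {L^j, R^j}, j = 1,...,t, cover all edges of the conflict graph: for any u, v ∈ ∪_i S^i with {u,v} not contained in any single S^i, there exists j with (u ∈ L^j and v ∈ R^j) or (u ∈ R^j and v ∈ L^j). -/
import Mathlib


/-- A Gray code for `d` numbers. -/
def IsGrayCode (d t : ℕ) (h : ℕ → Fin t → Bool) : Prop :=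
  (∀ i j, i < d → j < d → i ≠ j → h i ≠ h j) ∧
  (∀ i, i + 1 < d → (Finset.univ.filter fun j => h i j ≠ h (i + 1) j).card = 1)

/-- `L^j`: elements lying in some piece indexed where `h_j = 0` but in no piece
indexed where `h_j = 1`. -/
def Lset {α : Type*} [DecidableEq α] (d t : ℕ) (S : ℕ → Finset α)
    (h : ℕ → Fin t → Bool) (j : Fin t) : Finset α :=
  ((Finset.range d).filter fun i => h i j = false).biUnion S \
    ((Finset.range d).filter fun i => h i j = true).biUnion S

/-- `R^j`: elements lying in some piece indexed where `h_j = 1` but in no piece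
indexed where `h_j = 0`. -/
def Rset {α : Type*} [DecidableEq α] (d t : ℕ) (S : ℕ → Finset α)
    (h : ℕ → Fin t → Bool) (j : Fin t) : Finset α :=
  ((Finset.range d).filter fun i => h i j = true).biUnion S \
    ((Finset.range d).filter fun i => h i j = false).biUnion S

/-- For a consecutive pair of Gray-code words (or a degenerate pair), either they
agree everywhere or they differ in exactly one coordinate. -/
lemma grayPair (d t : ℕ) (h : ℕ → Fin t → Bool) (hg : IsGrayCode d t h)
    (a1 a2 : ℕ) (h12 : a1 ≤ a2) (h21 : a2 ≤ a1 + 1) (hd : a2 < d) :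
    (∀ j, h a1 j = h a2 j) ∨ ∃ jA : Fin t, ∀ j, h a1 j ≠ h a2 j ↔ j = jA := by
  rcases Nat.eq_or_lt_of_le h12 with rfl | hlt
  · exact Or.inl fun j => rfl
  · have ha2 : a2 = a1 + 1 := by omega
    subst ha2
    obtain ⟨j0, hj0⟩ := Finset.card_eq_one.mp (hg.2 a1 (by omega))
    refine Or.inr ⟨j0, fun j => ?_⟩
    constructor
    · intro hne
      have hmem : j ∈ Finset.univ.filter fun j => h a1 j ≠ h (a1 + 1) j := by
        simp [hne]
      rw [hj0] at hmem
      simpa using hmem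
    · intro hj
      subst hj
      have hmem : j ∈ Finset.univ.filter fun j => h a1 j ≠ h (a1 + 1) j := by
        rw [hj0]; exact Finset.mem_singleton_self j
      simpa using hmem

/-- Key combinatorial lemma on four boolean vectors. -/
lemma keyCoord (t : ℕ) (e1 e2 f1 f2 : Fin t → Bool)
    (hA : (∀ j, e1 j = e2 j) ∨ ∃ jA, ∀ j, e1 j ≠ e2 j ↔ j = jA)
    (hB : (∀ j, f1 j = f2 j) ∨ ∃ jB, ∀ j, f1 j ≠ f2 j ↔ j = jB)
    (h1 : e1 ≠ f1) (h2 : e1 ≠ f2) (h3 : e2 ≠ f1) (h4 : e2 ≠ f2) :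
    ∃ j, e1 j = e2 j ∧ f1 j = f2 j ∧ e2 j ≠ f1 j := by
  by_contra hc
  push_neg at hc
  rcases hA with hA | ⟨jA, hjA⟩ <;> rcases hB with hB | ⟨jB, hjB⟩
  · exact h3 (funext fun j => hc j (hA j) (hB j))
  · by_cases hv : e2 jB = f1 jB
    · apply h3; funext j
      by_cases hj : j = jB
      · subst hj; exact hv
      · exact hc j (hA j) (by by_contra hx; exact hj ((hjB j).mp hx))
    · apply h4; funext j
      by_cases hj : j = jB
      · subst hj
        have hf : f1 j ≠ f2 j := (hjB j).mpr rfl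
        cases hx : e2 j <;> cases hy : f1 j <;> cases hz : f2 j <;> simp_all
      · have hf : f1 j = f2 j := by by_contra hx; exact hj ((hjB j).mp hx)
        rw [← hf]; exact hc j (hA j) hf
  · by_cases hv : e2 jA = f1 jA
    · apply h3; funext j
      by_cases hj : j = jA
      · subst hj; exact hv
      · exact hc j (by by_contra hx; exact hj ((hjA j).mp hx)) (hB j)
    · apply h1; funext j
      by_cases hj : j = jA
      · subst hj
        have he : e1 j ≠ e2 j := (hjA j).mpr rfl
        cases hx : e1 j <;> cases hy : e2 j <;> cases hz : f1 j <;> simp_all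
      · have he : e1 j = e2 j := by by_contra hx; exact hj ((hjA j).mp hx)
        rw [he]; exact hc j he (hB j)
  · by_cases hvA : e2 jA = f1 jA <;> by_cases hvB : e2 jB = f1 jB
    · -- agree at both exceptional coords : e2 = f1
      apply h3; funext j
      by_cases hja : j = jA
      · subst hja; exact hvA
      · by_cases hjb : j = jB
        · subst hjb; exact hvB
        · exact hc j (by by_contra hx; exact hja ((hjA j).mp hx))
            (by by_contra hx; exact hjb ((hjB j).mp hx))
    · -- agree at jA, differ at jB : e2 = f2
      have hAB : jA ≠ jB := by rintro rfl; exact hvB hvA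
      apply h4; funext j
      by_cases hjb : j = jB
      · subst hjb
        have hf : f1 j ≠ f2 j := (hjB j).mpr rfl
        cases hx : e2 j <;> cases hy : f1 j <;> cases hz : f2 j <;> simp_all
      · have hf : f1 j = f2 j := by by_contra hx; exact hjb ((hjB j).mp hx)
        by_cases hja : j = jA
        · subst hja; rw [← hf]; exact hvA
        · have he : e1 j = e2 j := by by_contra hx; exact hja ((hjA j).mp hx)
          rw [← hf]; exact hc j he hf
    · -- differ at jA, agree at jB : e1 = f1
      have hAB : jA ≠ jB := by rintro rfl; exact hvA hvB
      apply h1; funext j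
      by_cases hja : j = jA
      · subst hja
        have he : e1 j ≠ e2 j := (hjA j).mpr rfl
        cases hx : e1 j <;> cases hy : e2 j <;> cases hz : f1 j <;> simp_all
      · have he : e1 j = e2 j := by by_contra hx; exact hja ((hjA j).mp hx)
        by_cases hjb : j = jB
        · subst hjb; rw [he]; exact hvB
        · have hf : f1 j = f2 j := by by_contra hx; exact hjb ((hjB j).mp hx)
          rw [he]; exact hc j he hf
    · -- differ at both exceptional coords
      by_cases hAB : jA = jB
      · -- single exceptional coord : e1 = f1
        subst hAB
        apply h1; funext j
        by_cases hja : j = jA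
        · subst hja
          have he : e1 j ≠ e2 j := (hjA j).mpr rfl
          cases hx : e1 j <;> cases hy : e2 j <;> cases hz : f1 j <;> simp_all
        · have he : e1 j = e2 j := by by_contra hx; exact hja ((hjA j).mp hx)
          have hf : f1 j = f2 j := by by_contra hx; exact hja ((hjB j).mp hx)
          rw [he]; exact hc j he hf
      · -- two distinct exceptional coords : e1 = f2
        apply h2; funext j
        by_cases hja : j = jA
        · subst hja
          have he : e1 j ≠ e2 j := (hjA j).mpr rfl
          have hf : f1 j = f2 j := by
            by_contra hx; exact hAB ((hjB j).mp hx)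
          cases hx : e1 j <;> cases hy : e2 j <;> cases hz : f1 j <;>
            cases hw : f2 j <;> simp_all
        · by_cases hjb : j = jB
          · subst hjb
            have he : e1 j = e2 j := by by_contra hx; exact hja ((hjA j).mp hx)
            have hf : f1 j ≠ f2 j := (hjB j).mpr rfl
            cases hx : e1 j <;> cases hy : e2 j <;> cases hz : f1 j <;>
              cases hw : f2 j <;> simp_all
          · have he : e1 j = e2 j := by by_contra hx; exact hja ((hjA j).mp hx)
            have hf : f1 j = f2 j := by by_contra hx; exact hjb ((hjB j).mp hx)
            rw [he, ← hf]; exact hc j he hf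

lemma ordered_case {α : Type*} [DecidableEq α] (d t : ℕ) (S : ℕ → Finset α)
    (h : ℕ → Fin t → Bool) (hg : IsGrayCode d t h) (u v : α)
    (a1 a2 b1 b2 : ℕ)
    (ha12 : a1 ≤ a2) (ha21 : a2 ≤ a1 + 1) (hb12 : b1 ≤ b2) (hb21 : b2 ≤ b1 + 1)
    (hab : a2 < b1) (hbd : b2 < d)
    (hua1 : u ∈ S a1) (hua2 : u ∈ S a2) (hvb1 : v ∈ S b1) (hvb2 : v ∈ S b2)
    (hIu : ∀ i, i < d → u ∈ S i → i = a1 ∨ i = a2)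
    (hIv : ∀ i, i < d → v ∈ S i → i = b1 ∨ i = b2) :
    ∃ j : Fin t, (u ∈ Lset d t S h j ∧ v ∈ Rset d t S h j) ∨
      (u ∈ Rset d t S h j ∧ v ∈ Lset d t S h j) := by
  have hA := grayPair d t h hg a1 a2 ha12 ha21 (by omega)
  have hB := grayPair d t h hg b1 b2 hb12 hb21 hbd
  have hinj := hg.1
  obtain ⟨j, hj1, hj2, hj3⟩ := keyCoord t (h a1) (h a2) (h b1) (h b2) hA hB
    (hinj a1 b1 (by omega) (by omega) (by omega))
    (hinj a1 b2 (by omega) (by omega) (by omega))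
    (hinj a2 b1 (by omega) (by omega) (by omega))
    (hinj a2 b2 (by omega) (by omega) (by omega))
  have hUu : ∀ i, i < d → u ∈ S i → h i j = h a2 j := by
    intro i hid hui
    rcases hIu i hid hui with rfl | rfl
    · exact hj1
    · rfl
  have hVv : ∀ i, i < d → v ∈ S i → h i j = h b1 j := by
    intro i hid hvi
    rcases hIv i hid hvi with rfl | rfl
    · rfl
    · exact hj2.symm
  refine ⟨j, ?_⟩
  cases hval : h a2 j
  · have hb1v : h b1 j = true := by cases hx : h b1 j <;> simp_all
    left
    constructor
    · simp only [Lset, Finset.mem_sdiff, Finset.mem_biUnion, Finset.mem_filter,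
        Finset.mem_range]
      refine ⟨⟨a2, ⟨by omega, hval⟩, hua2⟩, ?_⟩
      rintro ⟨i, ⟨hid, hit⟩, hui⟩
      rw [hUu i hid hui, hval] at hit
      exact Bool.false_ne_true hit
    · simp only [Rset, Finset.mem_sdiff, Finset.mem_biUnion, Finset.mem_filter,
        Finset.mem_range]
      refine ⟨⟨b1, ⟨by omega, hb1v⟩, hvb1⟩, ?_⟩
      rintro ⟨i, ⟨hid, hit⟩, hvi⟩
      rw [hVv i hid hvi, hb1v] at hit
      exact Bool.false_ne_true hit.symm
  · have hb1v : h b1 j = false := by cases hx : h b1 j <;> simp_all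
    right
    constructor
    · simp only [Rset, Finset.mem_sdiff, Finset.mem_biUnion, Finset.mem_filter,
        Finset.mem_range]
      refine ⟨⟨a2, ⟨by omega, hval⟩, hua2⟩, ?_⟩
      rintro ⟨i, ⟨hid, hit⟩, hui⟩
      rw [hUu i hid hui, hval] at hit
      exact Bool.false_ne_true hit.symm
    · simp only [Lset, Finset.mem_sdiff, Finset.mem_biUnion, Finset.mem_filter,
        Finset.mem_range]
      refine ⟨⟨b1, ⟨by omega, hb1v⟩, hvb1⟩, ?_⟩
      rintro ⟨i, ⟨hid, hit⟩, hvi⟩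
      rw [hVv i hid hvi, hb1v] at hit
      exact Bool.false_ne_true hit

lemma interval_struct {α : Type*} [DecidableEq α] (d : ℕ) (S : ℕ → Finset α)
    (hord : ∀ i j, i < d → j < d → i + 2 ≤ j → S i ∩ S j = ∅)
    (u : α) (hu : u ∈ (Finset.range d).biUnion S) :
    ∃ a1 a2 : ℕ, a1 ≤ a2 ∧ a2 ≤ a1 + 1 ∧ a2 < d ∧ u ∈ S a1 ∧ u ∈ S a2 ∧
      ∀ i, i < d → u ∈ S i → i = a1 ∨ i = a2 := by
  set Iu := (Finset.range d).filter fun i => u ∈ S i with hIu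
  have hne : Iu.Nonempty := by
    obtain ⟨i, hi, hui⟩ := Finset.mem_biUnion.mp hu
    exact ⟨i, Finset.mem_filter.mpr ⟨hi, hui⟩⟩
  set a1 := Iu.min' hne with ha1
  set a2 := Iu.max' hne with ha2
  have ha1m : a1 ∈ Iu := Finset.min'_mem _ _
  have ha2m : a2 ∈ Iu := Finset.max'_mem _ _
  have ha1d : a1 < d := Finset.mem_range.mp (Finset.mem_filter.mp ha1m).1
  have ha2d : a2 < d := Finset.mem_range.mp (Finset.mem_filter.mp ha2m).1
  have hua1 : u ∈ S a1 := (Finset.mem_filter.mp ha1m).2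
  have hua2 : u ∈ S a2 := (Finset.mem_filter.mp ha2m).2
  have h12 : a1 ≤ a2 := Finset.min'_le _ _ ha2m
  have h21 : a2 ≤ a1 + 1 := by
    by_contra hcon
    have hdis := hord a1 a2 ha1d ha2d (by omega)
    have : u ∈ S a1 ∩ S a2 := Finset.mem_inter.mpr ⟨hua1, hua2⟩
    rw [hdis] at this
    exact absurd this (Finset.notMem_empty u)
  refine ⟨a1, a2, h12, h21, ha2d, hua1, hua2, ?_⟩
  intro i hid hui
  have him : i ∈ Iu := Finset.mem_filter.mpr ⟨Finset.mem_range.mpr hid, hui⟩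
  have := Finset.min'_le _ _ him
  have := Finset.le_max' _ _ him
  omega

/-- For a generalized 1D-ordered family and a Gray code, the bicliques
`{L^j, R^j}` cover all edges of the conflict graph: any conflicting pair `u, v` is
separated by some coordinate `j`. -/
theorem gray_code_biclique_cover {α : Type*} [DecidableEq α] (d t : ℕ)
    (S : ℕ → Finset α)
    (hord : ∀ i j, i < d → j < d → i + 2 ≤ j → S i ∩ S j = ∅)
    (h : ℕ → Fin t → Bool) (hg : IsGrayCode d t h)
    (u v : α) (hu : u ∈ (Finset.range d).biUnion S)
    (hv : v ∈ (Finset.range d).biUnion S) (huv : u ≠ v)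
    (hconf : ∀ i, i < d → ¬ (u ∈ S i ∧ v ∈ S i)) :
    ∃ j : Fin t, (u ∈ Lset d t S h j ∧ v ∈ Rset d t S h j) ∨
      (u ∈ Rset d t S h j ∧ v ∈ Lset d t S h j) := by
  obtain ⟨a1, a2, ha12, ha21, ha2d, hua1, hua2, hIu⟩ :=
    interval_struct d S hord u hu
  obtain ⟨b1, b2, hb12, hb21, hb2d, hvb1, hvb2, hIv⟩ :=
    interval_struct d S hord v hv
  have hcase : a2 < b1 ∨ b2 < a1 := by
    by_contra hcon
    push_neg at hcon
    obtain ⟨hc1, hc2⟩ := hcon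
    by_cases hle : a1 ≤ b1
    · have hb1' : b1 = a1 ∨ b1 = a2 := by omega
      have hub1 : u ∈ S b1 := by rcases hb1' with rfl | rfl <;> assumption
      exact hconf b1 (by omega) ⟨hub1, hvb1⟩
    · have hb2' : b2 = a1 := by omega
      subst hb2'
      exact hconf b2 (by omega) ⟨hua1, hvb2⟩
  rcases hcase with hcase | hcase
  · exact ordered_case d t S h hg u v a1 a2 b1 b2 ha12 ha21 hb12 hb21 hcase hb2d
      hua1 hua2 hvb1 hvb2 hIu hIv
  · obtain ⟨j, hj⟩ := ordered_case d t S h hg v u b1 b2 a1 a2 hb12 hb21 ha12 ha21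
      hcase (by omega) hvb1 hvb2 hua1 hua2 hIv hIu
    exact ⟨j, hj.symm.imp (fun p => ⟨p.2, p.1⟩) (fun p => ⟨p.2, p.1⟩)⟩
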